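/- For real-valued functions $Z_t$ on $\mathbb{R}$ (with suitable decay), the quantity $-\Im\, [Z_t,\mathbb H]\partial_{\alpha'}\bar Z_t$, where $\mathbb H$ is the Hilbert transform on the line, equals $\frac{1}{2\pi}\int \frac{|Z_t(\alpha')-Z_t(\beta')|^2}{(\alpha'-\beta')^2}\,d\beta'$, and in particular $A_1 := 1 - \Im\,[Z_t,\mathbb H]\partial_{\alpha'}\bar Z_t \ge 1$. -/

import Mathlib

open MeasureTheory Filter Complex

/-- Principal value: the truncated integrals of `f` away from the singularity `x`
tend to `L` as the truncation parameter tends to `0⁺`. -/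
def pvAt (f : ℝ → ℂ) (x : ℝ) (L : ℂ) : Prop :=
  Tendsto (fun ε : ℝ => ∫ y in {y : ℝ | ε < |x - y|}, f y)
    (nhdsWithin 0 (Set.Ioi 0)) (nhds L)

set_option maxHeartbeats 2000000 in
/-- For a Schwartz function `Zt` on `ℝ`, with `g = ∂(conj Zt)`, the quantity
`-Im [Zt, ℍ] ∂ conj Zt` equals `(1/2π) ∫ |Zt(α)-Zt(β)|²/(α-β)² dβ`, and hence
`A₁ = 1 - Im [Zt, ℍ] ∂ conj Zt ≥ 1`. -/
theorem stmt0 (Zt : SchwartzMap ℝ ℂ)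
    (HZg Hprod : ℝ → ℂ)
    (hHZg : ∀ α : ℝ, pvAt (fun β : ℝ =>
      deriv (fun s : ℝ => (starRingEnd ℂ) (Zt s)) β /
        ((Real.pi : ℂ) * Complex.I * ((α : ℂ) - (β : ℂ)))) α (HZg α))
    (hHprod : ∀ α : ℝ, pvAt (fun β : ℝ =>
      Zt β * deriv (fun s : ℝ => (starRingEnd ℂ) (Zt s)) β /
        ((Real.pi : ℂ) * Complex.I * ((α : ℂ) - (β : ℂ)))) α (Hprod α)) :
    ∀ α : ℝ,
      (-(Zt α * HZg α - Hprod α).im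
          = (1 / (2 * Real.pi)) * ∫ β : ℝ, ‖Zt α - Zt β‖ ^ 2 / (α - β) ^ 2)
      ∧ 1 ≤ 1 - (Zt α * HZg α - Hprod α).im := by
  -- notation and general facts
  have hZdiff : ∀ x : ℝ, HasDerivAt (fun s : ℝ => Zt s) (deriv Zt x) x := fun x =>
    (((Zt.smooth 1).differentiable one_ne_zero) x).hasDerivAt
  set g : ℝ → ℂ := fun β => deriv (fun s : ℝ => (starRingEnd ℂ) (Zt s)) β with hgdef
  have hgstar : ∀ β, HasDerivAt (fun s : ℝ => (starRingEnd ℂ) (Zt s))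
      ((starRingEnd ℂ) (deriv Zt β)) β := by
    intro β
    simpa only [starRingEnd_apply] using (hZdiff β).star
  have hgeq : ∀ β, g β = (starRingEnd ℂ) (deriv Zt β) := fun β => (hgstar β).deriv
  have hgnorm : ∀ β, ‖g β‖ = ‖deriv Zt β‖ := fun β => by
    rw [hgeq β, RCLike.norm_conj]
  -- bounds
  obtain ⟨B, hB0, hB⟩ : ∃ B : ℝ, 0 < B ∧ ∀ x, ‖Zt x‖ ≤ B := by
    obtain ⟨C, hC0, hC⟩ := Zt.decay 0 0
    refine ⟨C, hC0, fun x => ?_⟩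
    simpa [norm_iteratedFDeriv_zero] using hC x
  set Zd : SchwartzMap ℝ ℂ := SchwartzMap.derivCLM ℝ ℂ Zt with hZddef
  have hZdapp : ∀ x, Zd x = deriv Zt x := fun x => SchwartzMap.derivCLM_apply ℝ Zt x
  have hgZd : ∀ β, ‖g β‖ = ‖Zd β‖ := fun β => by rw [hgnorm β, hZdapp]
  obtain ⟨L, hL0, hL⟩ : ∃ L : ℝ, 0 < L ∧ ∀ x, ‖deriv Zt x‖ ≤ L := by
    obtain ⟨C, hC0, hC⟩ := Zd.decay 0 0
    refine ⟨C, hC0, fun x => ?_⟩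
    rw [← hZdapp]
    simpa [norm_iteratedFDeriv_zero] using hC x
  have hLip : ∀ x y : ℝ, ‖Zt x - Zt y‖ ≤ L * |x - y| := by
    intro x y
    have := convex_univ.norm_image_sub_le_of_norm_hasDerivWithin_le
      (f := fun s : ℝ => Zt s) (f' := fun x => deriv Zt x) (s := Set.univ)
      (fun z _ => (hZdiff z).hasDerivWithinAt) (fun z _ => hL z)
      (Set.mem_univ y) (Set.mem_univ x)
    simpa [Real.norm_eq_abs] using this
  intro α
  have hπ : (0:ℝ) < Real.pi := Real.pi_pos
  -- the combined (integrable) kernel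
  set h : ℝ → ℂ := fun β =>
    (Zt α - Zt β) * g β / ((Real.pi : ℂ) * Complex.I * ((α:ℂ) - (β:ℂ))) with hhdef
  have hD : ∀ β : ℝ, β ≠ α → ((Real.pi : ℂ) * Complex.I * ((α:ℂ) - (β:ℂ))) ≠ 0 := by
    intro β hβ
    refine mul_ne_zero (mul_ne_zero ?_ Complex.I_ne_zero) ?_
    · exact_mod_cast Real.pi_ne_zero
    · rw [sub_ne_zero]
      exact_mod_cast (Ne.symm hβ)
  have hDnorm : ∀ β : ℝ, ‖(Real.pi : ℂ) * Complex.I * ((α:ℂ) - (β:ℂ))‖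
      = Real.pi * |α - β| := by
    intro β
    rw [norm_mul, norm_mul, Complex.norm_I, mul_one, ← Complex.ofReal_sub,
      Complex.norm_real, Complex.norm_real, Real.norm_eq_abs, Real.norm_eq_abs,
      abs_of_pos hπ]
  have hdenmeas : Measurable (fun y : ℝ => (Real.pi : ℂ) * Complex.I * ((α:ℂ) - (y:ℂ))) := by
    fun_prop
  have hbound1 : ∀ β, ‖h β‖ ≤ (L / Real.pi) * ‖Zd β‖ := by
    intro β
    rcases eq_or_ne β α with rfl | hβ
    · have : h β = 0 := by simp [hhdef]
      rw [this, norm_zero]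
      positivity
    · have hd : (0:ℝ) < |α - β| := by
        rw [abs_pos, sub_ne_zero]
        exact Ne.symm hβ
      rw [hhdef]
      simp only []
      rw [norm_div, hDnorm, norm_mul, hgnorm, hZdapp]
      rw [div_le_iff₀ (by positivity)]
      have h1 : ‖Zt α - Zt β‖ ≤ L * |α - β| := hLip α β
      have h2 : (0:ℝ) ≤ ‖deriv Zt β‖ := norm_nonneg _
      have := mul_le_mul_of_nonneg_right h1 h2
      calc ‖Zt α - Zt β‖ * ‖deriv Zt β‖ ≤ L * |α - β| * ‖deriv Zt β‖ := this
        _ = L / Real.pi * ‖deriv Zt β‖ * (Real.pi * |α - β|) := by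
            field_simp
  have hbound2 : ∀ β, ‖h β‖ ≤ L * L / Real.pi := by
    intro β
    refine (hbound1 β).trans ?_
    rw [hZdapp]
    calc L / Real.pi * ‖deriv Zt β‖ ≤ L / Real.pi * L := by
          apply mul_le_mul_of_nonneg_left (hL β) (by positivity)
      _ = L * L / Real.pi := by ring
  have hgcont : Continuous g := by
    have : g = fun β => (starRingEnd ℂ) (Zd β) := funext fun β => by
      rw [hgeq β, hZdapp]
    rw [this]
    exact continuous_star.comp Zd.continuous
  have hmeas : AEStronglyMeasurable h volume := by
    apply Measurable.aestronglyMeasurable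
    apply Measurable.div
    · exact ((continuous_const.sub Zt.continuous).mul hgcont).measurable
    · fun_prop
  have hint : Integrable h := by
    refine Integrable.mono' ((Zd.integrable.norm).const_mul (L / Real.pi)) hmeas ?_
    exact ae_of_all _ hbound1
  -- Step A: the commutator equals the integral of h
  have hSmeas : ∀ ε : ℝ, MeasurableSet {y : ℝ | ε < |α - y|} := fun ε =>
    measurableSet_lt measurable_const ((continuous_const.sub continuous_id).abs).measurable
  have hrepr : Zt α * HZg α - Hprod α = ∫ y, h y := by
    have tZg : Tendsto (fun ε : ℝ => ∫ y in {y : ℝ | ε < |α - y|},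
        g y / ((Real.pi:ℂ) * Complex.I * ((α:ℂ)-(y:ℂ))))
        (nhdsWithin 0 (Set.Ioi 0)) (nhds (HZg α)) := hHZg α
    have tZprod : Tendsto (fun ε : ℝ => ∫ y in {y : ℝ | ε < |α - y|},
        Zt y * g y / ((Real.pi:ℂ) * Complex.I * ((α:ℂ)-(y:ℂ))))
        (nhdsWithin 0 (Set.Ioi 0)) (nhds (Hprod α)) := hHprod α
    have hf1 : ∀ ε : ℝ, 0 < ε → IntegrableOn
        (fun y : ℝ => g y / ((Real.pi:ℂ) * Complex.I * ((α:ℂ)-(y:ℂ)))) {y : ℝ | ε < |α - y|} := by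
      intro ε hε
      refine Integrable.mono' (((Zd.integrable.norm).const_mul (1/(Real.pi*ε))).restrict) ?_ ?_
      · exact (hgcont.measurable.div hdenmeas).aestronglyMeasurable
      · rw [ae_restrict_iff' (hSmeas ε)]
        refine ae_of_all _ fun y hy => ?_
        have hy' : ε < |α - y| := hy
        rw [norm_div, hDnorm, hgZd]
        have hrw : (1/(Real.pi*ε)) * ‖Zd y‖ = ‖Zd y‖ / (Real.pi * ε) := by ring
        rw [hrw]
        gcongr
    have hf2 : ∀ ε : ℝ, 0 < ε → IntegrableOn
        (fun y : ℝ => Zt y * g y / ((Real.pi:ℂ) * Complex.I * ((α:ℂ)-(y:ℂ))))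
        {y : ℝ | ε < |α - y|} := by
      intro ε hε
      refine Integrable.mono' (((Zd.integrable.norm).const_mul (B/(Real.pi*ε))).restrict) ?_ ?_
      · exact ((Zt.continuous.measurable.mul hgcont.measurable).div hdenmeas).aestronglyMeasurable
      · rw [ae_restrict_iff' (hSmeas ε)]
        refine ae_of_all _ fun y hy => ?_
        have hy' : ε < |α - y| := hy
        rw [norm_div, hDnorm, norm_mul, hgZd]
        have hrw : (B/(Real.pi*ε)) * ‖Zd y‖ = (B * ‖Zd y‖) / (Real.pi * ε) := by ring
        rw [hrw]
        gcongr
        exact hB y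
    have hstep : ∀ ε ∈ Set.Ioi (0:ℝ),
        ∫ y in {y : ℝ | ε < |α - y|}, h y
          = Zt α * (∫ y in {y : ℝ | ε < |α - y|},
              g y / ((Real.pi:ℂ) * Complex.I * ((α:ℂ)-(y:ℂ))))
            - ∫ y in {y : ℝ | ε < |α - y|},
              Zt y * g y / ((Real.pi:ℂ) * Complex.I * ((α:ℂ)-(y:ℂ))) := by
      intro ε hε
      have hptwise : ∀ y : ℝ, h y
          = Zt α * (g y / ((Real.pi:ℂ) * Complex.I * ((α:ℂ)-(y:ℂ))))
            - Zt y * g y / ((Real.pi:ℂ) * Complex.I * ((α:ℂ)-(y:ℂ))) := by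
        intro y
        rcases eq_or_ne y α with rfl|hy
        · simp [hhdef]
        · rw [hhdef]
          field_simp [hD y hy]
      calc ∫ y in {y : ℝ | ε < |α - y|}, h y
          = ∫ y in {y : ℝ | ε < |α - y|},
              (Zt α * (g y / ((Real.pi:ℂ) * Complex.I * ((α:ℂ)-(y:ℂ))))
                - Zt y * g y / ((Real.pi:ℂ) * Complex.I * ((α:ℂ)-(y:ℂ)))) := by
            exact integral_congr_ae (ae_of_all _ fun y => hptwise y)
        _ = _ := by
            rw [integral_sub ((hf1 ε hε).const_mul (Zt α)) (hf2 ε hε), integral_const_mul]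
    have hcompl : ∀ ε : ℝ, {y : ℝ | ε < |α - y|}ᶜ = Metric.closedBall α ε := by
      intro ε
      ext y
      simp [Metric.mem_closedBall, Real.dist_eq, abs_sub_comm, not_lt]
    have hsmall : Tendsto (fun ε : ℝ => ∫ y in Metric.closedBall α ε, h y)
        (nhdsWithin 0 (Set.Ioi 0)) (nhds 0) := by
      have hgtend : Tendsto (fun ε : ℝ => (L * L / Real.pi) * (2 * ε))
          (nhdsWithin 0 (Set.Ioi 0)) (nhds 0) := by
        have hc : Continuous (fun ε : ℝ => (L * L / Real.pi) * (2 * ε)) := by fun_prop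
        have := (hc.tendsto 0).mono_left (nhdsWithin_le_nhds (s := Set.Ioi (0:ℝ)))
        simpa using this
      refine squeeze_zero_norm' ?_ hgtend
      filter_upwards [self_mem_nhdsWithin] with ε (hε : (0:ℝ) < ε)
      have hμ : volume (Metric.closedBall α ε) < ⊤ := measure_closedBall_lt_top
      have hle := norm_setIntegral_le_of_norm_le_const hμ (fun y _ => hbound2 y)
      rwa [Real.volume_real_closedBall (by linarith)] at hle
    have htrunc : Tendsto (fun ε : ℝ => ∫ y in {y : ℝ | ε < |α - y|}, h y)
        (nhdsWithin 0 (Set.Ioi 0)) (nhds (∫ y, h y)) := by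
      have heq : ∀ᶠ ε in nhdsWithin (0:ℝ) (Set.Ioi 0),
          (∫ y, h y) - (∫ y in Metric.closedBall α ε, h y)
            = ∫ y in {y : ℝ | ε < |α - y|}, h y := by
        filter_upwards [self_mem_nhdsWithin] with ε hε
        have hadd := integral_add_compl (hSmeas ε) hint
        rw [hcompl ε] at hadd
        rw [← hadd]
        ring
      have := (tendsto_const_nhds.sub hsmall).congr' heq
      simpa using this
    have hlim2 : Tendsto (fun ε : ℝ => ∫ y in {y : ℝ | ε < |α - y|}, h y)
        (nhdsWithin 0 (Set.Ioi 0)) (nhds (Zt α * HZg α - Hprod α)) := by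
      have t1 := (tZg.const_mul (Zt α)).sub tZprod
      refine t1.congr' ?_
      filter_upwards [self_mem_nhdsWithin] with ε hε
      exact (hstep ε hε).symm
    exact tendsto_nhds_unique hlim2 htrunc
  -- Step B: pointwise imaginary part identity
  set φ : ℝ → ℝ := fun β => ‖Zt α - Zt β‖ ^ 2 with hφdef
  set φ' : ℝ → ℝ := fun β =>
    2 * (inner ℝ (Zt α - Zt β) (-(deriv Zt β)) : ℝ) with hφ'def
  have hφderiv : ∀ β, HasDerivAt φ (φ' β) β := fun β =>
    HasDerivAt.norm_sq ((hZdiff β).const_sub (Zt α))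
  have hφ'eq : ∀ β, φ' β
      = -2 * ((Zt α - Zt β).re * (deriv Zt β).re + (Zt α - Zt β).im * (deriv Zt β).im) := by
    intro β
    rw [hφ'def]
    simp [RCLike.inner_apply, Complex.mul_re, Complex.conj_re, Complex.conj_im]
    ring
  set w1 : ℝ → ℝ := fun β => φ' β / (α - β) with hw1def
  set w2 : ℝ → ℝ := fun β => φ β / (α - β) ^ 2 with hw2def
  have him : ∀ β, (h β).im = (1 / (2 * Real.pi)) * w1 β := by
    intro β
    have hhβ : h β = (Zt α - Zt β) * (starRingEnd ℂ) (deriv Zt β) /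
        ((Real.pi:ℂ) * Complex.I * ((α:ℂ)-(β:ℂ))) := by
      rw [hhdef]
      simp only []
      rw [hgeq β]
    have hw1β : w1 β = φ' β / (α - β) := rfl
    rw [hhβ, hw1β, hφ'eq β]
    rcases eq_or_ne β α with rfl|hβ
    · simp
    · have hd : α - β ≠ 0 := sub_ne_zero.mpr (Ne.symm hβ)
      have hDeq : (Real.pi:ℂ) * Complex.I * ((α:ℂ)-(β:ℂ))
          = ((Real.pi*(α-β):ℝ):ℂ) * Complex.I := by
        push_cast; ring
      rw [hDeq, Complex.div_im]
      simp [Complex.mul_re, Complex.mul_im, Complex.normSq_apply]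
      field_simp
  have hw1int : Integrable w1 := by
    have hfun : w1 = fun β => (2 * Real.pi) * (h β).im := by
      funext β
      rw [him β]
      field_simp
    rw [hfun]
    exact hint.im.const_mul _
  have h1φ : ∀ β, φ β ≤ L * L * (α - β) ^ 2 := by
    intro β
    have h0 := hLip α β
    have : φ β = ‖Zt α - Zt β‖ ^ 2 := rfl
    rw [this]
    nlinarith [norm_nonneg (Zt α - Zt β), abs_nonneg (α-β), _root_.sq_abs (α-β)]
  have h2φ : ∀ β, φ β ≤ 4 * B * B := by
    intro β
    have h3 := hB α
    have h4 := hB β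
    have h5 := norm_sub_le (Zt α) (Zt β)
    have : φ β = ‖Zt α - Zt β‖ ^ 2 := rfl
    rw [this]
    nlinarith [norm_nonneg (Zt α - Zt β)]
  have hφ0 : ∀ β, 0 ≤ φ β := by
    intro β
    have : φ β = ‖Zt α - Zt β‖ ^ 2 := rfl
    rw [this]
    positivity
  have hw2int : Integrable w2 := by
    have hdom : Integrable (fun β : ℝ => (L*L + 4*B*B) * (1 + (α-β)^2)⁻¹) :=
      (integrable_inv_one_add_sq.comp_sub_left α).const_mul _
    refine hdom.mono' ?_ (ae_of_all _ ?_)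
    · apply Measurable.aestronglyMeasurable
      apply Measurable.div
      · exact ((continuous_const.sub Zt.continuous).norm.pow 2).measurable
      · fun_prop
    · intro β
      have h1 := h1φ β
      have h2 := h2φ β
      have hw2β : w2 β = φ β / (α - β) ^ 2 := rfl
      rw [Real.norm_eq_abs, hw2β, _root_.abs_of_nonneg (div_nonneg (hφ0 β) (sq_nonneg _))]
      rcases eq_or_ne β α with rfl|hβ
      · simp
        positivity
      · have hd : (α-β) ≠ 0 := sub_ne_zero.mpr (Ne.symm hβ)
        rw [inv_eq_one_div, mul_one_div, div_le_div_iff₀ (by positivity) (by positivity)]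
        nlinarith [mul_le_mul_of_nonneg_right h2 (sq_nonneg (α-β)), h1]
  -- Step C: integration by parts
  have hsplit : ∫ β, w1 β = - ∫ β, w2 β := by
    set u : ℝ → ℝ := fun β => φ β / (α - β) with hudef
    have hu0 : u α = 0 := by simp [hudef]
    have hubound : ∀ β, ‖u β‖ ≤ L*L * |α - β| := by
      intro β
      rcases eq_or_ne β α with rfl|hβ
      · simp [hu0]
      · have hd : (0:ℝ) < |α - β| := abs_pos.mpr (sub_ne_zero.mpr (Ne.symm hβ))
        rw [Real.norm_eq_abs, hudef]
        rw [abs_div, div_le_iff₀ hd, _root_.abs_of_nonneg (hφ0 β)]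
        nlinarith [h1φ β, _root_.sq_abs (α - β)]
    have hucont : ContinuousAt u α := by
      have ht : Tendsto u (nhds α) (nhds 0) := by
        apply squeeze_zero_norm hubound
        have hc : Continuous (fun β : ℝ => L*L*|α-β|) := by fun_prop
        have h := hc.tendsto α
        simpa using h
      rw [ContinuousAt, hu0]; exact ht
    have huderiv : ∀ β, β ≠ α → HasDerivAt u (w1 β + w2 β) β := by
      intro β hβ
      have hd : α - β ≠ 0 := sub_ne_zero.mpr (Ne.symm hβ)
      have hv : HasDerivAt (fun t : ℝ => α - t) (-1) β := (hasDerivAt_id β).const_sub α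
      have hder := (hφderiv β).div hv hd
      have hwe : w1 β + w2 β = (φ' β * (α - β) - φ β * -1) / (α - β) ^ 2 := by
        rw [hw1def, hw2def]
        field_simp
        ring
      exact hder.congr_deriv hwe.symm
    have hubound2 : ∀ β, ‖u β‖ ≤ 4*B*B * |α-β|⁻¹ := by
      intro β
      rcases eq_or_ne β α with rfl|hβ
      · simp [hu0]
      · have hd : (0:ℝ) < |α - β| := abs_pos.mpr (sub_ne_zero.mpr (Ne.symm hβ))
        rw [Real.norm_eq_abs, hudef, abs_div, _root_.abs_of_nonneg (hφ0 β), div_eq_mul_inv]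
        exact mul_le_mul_of_nonneg_right (h2φ β) (by positivity)
    have habs_top : Tendsto (fun β : ℝ => |α - β|) atTop atTop := by
      apply tendsto_abs_atBot_atTop.comp
      have : Tendsto (fun β : ℝ => α + -β) atTop atBot :=
        tendsto_atBot_add_const_left atTop α tendsto_neg_atTop_atBot
      exact Tendsto.congr (fun β => (sub_eq_add_neg α β).symm) this
    have habs_bot : Tendsto (fun β : ℝ => |α - β|) atBot atTop := by
      apply tendsto_abs_atTop_atTop.comp
      have : Tendsto (fun β : ℝ => α + -β) atBot atTop :=
        tendsto_atTop_add_const_left atBot α tendsto_neg_atBot_atTop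
      exact Tendsto.congr (fun β => (sub_eq_add_neg α β).symm) this
    have hutop : Tendsto u atTop (nhds 0) := by
      apply squeeze_zero_norm hubound2
      have := (habs_top.inv_tendsto_atTop).const_mul (4*B*B)
      simpa using this
    have hubot : Tendsto u atBot (nhds 0) := by
      apply squeeze_zero_norm hubound2
      have := (habs_bot.inv_tendsto_atTop).const_mul (4*B*B)
      simpa using this
    have hIoi := integral_Ioi_of_hasDerivAt_of_tendsto (f := u) (f' := fun β => w1 β + w2 β)
        hucont.continuousWithinAt
        (fun x hx => huderiv x (ne_of_gt hx)) ((hw1int.add hw2int).integrableOn) hutop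
    have hIic := integral_Iic_of_hasDerivAt_of_tendsto (f := u) (f' := fun β => w1 β + w2 β)
        hucont.continuousWithinAt
        (fun x hx => huderiv x (ne_of_lt hx)) ((hw1int.add hw2int).integrableOn) hubot
    have hint12 : Integrable (fun β => w1 β + w2 β) volume := by
      exact hw1int.add hw2int
    have htot : ∫ β, (w1 β + w2 β) = 0 := by
      rw [← intervalIntegral.integral_Iic_add_Ioi (f := fun β => w1 β + w2 β)
        hint12.integrableOn hint12.integrableOn, hIic, hIoi, hu0]
      ring
    have hadd := integral_add hw1int hw2int
    rw [htot] at hadd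
    linarith [hadd]
  -- Final assembly
  have key : -(Zt α * HZg α - Hprod α).im
      = (1 / (2 * Real.pi)) * ∫ β : ℝ, ‖Zt α - Zt β‖ ^ 2 / (α - β) ^ 2 := by
    rw [hrepr]
    have him_int : ∫ β, (h β).im = (∫ y, h y).im := by
      simpa using integral_im hint
    rw [← him_int]
    have hw1rw : ∫ β, (h β).im = (1 / (2 * Real.pi)) * ∫ β, w1 β := by
      rw [← integral_const_mul]
      exact integral_congr_ae (ae_of_all _ fun β => him β)
    rw [hw1rw, hsplit]
    have hintegrand : (fun β : ℝ => ‖Zt α - Zt β‖ ^ 2 / (α - β) ^ 2) = w2 := rfl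
    rw [hintegrand]
    ring
  refine ⟨key, ?_⟩
  have hnn : 0 ≤ (1 / (2 * Real.pi)) * ∫ β : ℝ, ‖Zt α - Zt β‖ ^ 2 / (α - β) ^ 2 := by
    apply mul_nonneg (by positivity)
    apply integral_nonneg
    intro β
    positivity
  rw [← key] at hnn
  linarith
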